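/- Let B ≥ 2 and let y_± ∈ ℂ^B be the vector whose first component is ±√(B−1) and whose remaining B−1 components all equal 1. Then s(y_±) = (1/2)·log(B−1) + log 2, and r_∞(y_±) + r_{−1/2}(y_±) = log(B−1) + 2·log(1 + (B−1)^{−1/2}). -/

import Mathlib

noncomputable section

/-- Shannon entropy of a vector (convention `0 · log 0 = 0`). -/
def shannonEnt {n : Type*} [Fintype n] (x : n → ℂ) : ℝ :=
  -∑ j, (‖x j‖ ^ 2 / ∑ i, ‖x i‖ ^ 2) * Real.log (‖x j‖ ^ 2 / ∑ i, ‖x i‖ ^ 2)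

/-- Rényi entropy of a vector, for a parameter `ρ`. -/
def renyiEnt {n : Type*} [Fintype n] (ρ : ℝ) (x : n → ℂ) : ℝ :=
  -(1 / ρ) * Real.log (∑ j, (‖x j‖ ^ 2 / ∑ i, ‖x i‖ ^ 2) ^ (1 + ρ))

/-- The `ρ = ∞` Rényi entropy: `−log max_j |x_j|²/‖x‖²`. -/
def renyiEntInf {n : Type*} [Fintype n] (x : n → ℂ) : ℝ :=
  -Real.log (⨆ j, ‖x j‖ ^ 2 / ∑ i, ‖x i‖ ^ 2)

/-- The vector `y_±` (sign `ε = ±1`): first component `± √(B−1)`, all other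
components `1`. -/
def yvec (B : ℕ) (ε : ℝ) : Fin B → ℂ := fun m =>
  if (m : ℕ) = 0 then ((ε * Real.sqrt ((B : ℝ) - 1) : ℝ) : ℂ) else 1

lemma sum_ite_fin (B : ℕ) (hB : 2 ≤ B) (c d : ℝ) :
    ∑ j : Fin B, (if (j : ℕ) = 0 then c else d) = c + ((B : ℝ) - 1) * d := by
  haveI : NeZero B := ⟨by omega⟩
  rw [← Finset.add_sum_erase _ _ (Finset.mem_univ (0 : Fin B))]
  have h1 : ∀ j ∈ Finset.univ.erase (0 : Fin B),
      (if (j : ℕ) = 0 then c else d) = d := by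
    intro j hj
    rw [if_neg]
    exact fun h => (Finset.mem_erase.mp hj).1 (Fin.ext (by simpa using h))
  rw [Finset.sum_congr rfl h1, Finset.sum_const,
    Finset.card_erase_of_mem (Finset.mem_univ _), Finset.card_univ,
    Fintype.card_fin, nsmul_eq_mul, Nat.cast_sub (by omega), Nat.cast_one]
  simp

/-- Entropies of `y_±`:
`s(y_±) = (1/2) log(B−1) + log 2` and
`r_∞(y_±) + r_{−1/2}(y_±) = log(B−1) + 2 log(1 + (B−1)^{−1/2})`. -/
theorem entropies_yvec (B : ℕ) (hB : 2 ≤ B)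
    (ε : ℝ) (hε : ε = 1 ∨ ε = -1) :
    shannonEnt (yvec B ε) = (1 / 2) * Real.log ((B : ℝ) - 1) + Real.log 2 ∧
    renyiEntInf (yvec B ε) + renyiEnt (-(1 / 2)) (yvec B ε) =
      Real.log ((B : ℝ) - 1) +
        2 * Real.log (1 + (Real.sqrt ((B : ℝ) - 1))⁻¹) := by
  haveI : Nonempty (Fin B) := ⟨⟨0, by omega⟩⟩
  set a : ℝ := (B : ℝ) - 1 with haa
  have ha1 : (1 : ℝ) ≤ a := by
    have : (2 : ℝ) ≤ (B : ℝ) := by exact_mod_cast hB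
    simp [haa]; linarith
  have ha0 : a ≠ 0 := by linarith
  have ha0' : (0 : ℝ) ≤ a := by linarith
  have hε2 : ε ^ 2 = 1 := by rcases hε with h | h <;> simp [h]
  have hn : ∀ j : Fin B, ‖yvec B ε j‖ ^ 2 = if (j : ℕ) = 0 then a else 1 := by
    intro j
    by_cases h : (j : ℕ) = 0
    · simp only [yvec, if_pos h, Complex.norm_real, Real.norm_eq_abs, sq_abs,
        mul_pow, hε2, one_mul]
      rw [Real.sq_sqrt ha0']
    · simp [yvec, h]
  have sumG : ∀ G : ℝ → ℝ, ∑ j : Fin B, G (‖yvec B ε j‖ ^ 2)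
      = G a + ((B : ℝ) - 1) * G 1 := by
    intro G
    rw [← sum_ite_fin B hB (G a) (G 1)]
    refine Finset.sum_congr rfl fun j _ => ?_
    rw [hn j, apply_ite G]
  have hS : ∑ i, ‖yvec B ε i‖ ^ 2 = 2 * a := by
    have h := sumG (fun t => t)
    rw [h, ← haa]; ring
  have e1 : a / (2 * a) = 1 / 2 := by
    rw [mul_comm, ← div_div, div_self ha0]
  have l1 : Real.log (1 / 2) = -Real.log 2 := by rw [one_div, Real.log_inv]
  have l2 : Real.log (1 / (2 * a)) = -(Real.log 2 + Real.log a) := by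
    rw [one_div, Real.log_inv, Real.log_mul two_ne_zero ha0]
  constructor
  · unfold shannonEnt
    rw [hS]
    have h := sumG (fun t => t / (2 * a) * Real.log (t / (2 * a)))
    rw [h, ← haa, e1, l1, l2]
    field_simp
    ring
  · -- sup computation
    have hsup : (⨆ j, ‖yvec B ε j‖ ^ 2 / ∑ i, ‖yvec B ε i‖ ^ 2) = 1 / 2 := by
      rw [hS]
      apply le_antisymm
      · apply ciSup_le
        intro j
        rw [hn j]
        split_ifs
        · rw [e1]
        · exact one_div_le_one_div_of_le two_pos (by linarith)
      · have hle := le_ciSup (f := fun j : Fin B => ‖yvec B ε j‖ ^ 2 / (2 * a))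
          (Finite.bddAbove_range _) (⟨0, by omega⟩ : Fin B)
        rw [hn ⟨0, by omega⟩] at hle
        simpa [e1] using hle
    set sa : ℝ := Real.sqrt a with hsa_def
    have hsa1 : (1 : ℝ) ≤ sa := by
      rw [hsa_def, show (1:ℝ) = Real.sqrt 1 by simp]
      exact Real.sqrt_le_sqrt ha1
    have hsa0 : sa ≠ 0 := by linarith
    have hsa2 : sa ^ 2 = a := Real.sq_sqrt ha0'
    have h2 : Real.sqrt 2 ≠ 0 := by positivity
    have h1sa : (1 : ℝ) + sa ≠ 0 := by linarith
    -- the renyi sum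
    have hexp : (1 : ℝ) + -(1 / 2) = 1 / 2 := by norm_num
    unfold renyiEnt renyiEntInf
    rw [hsup, hS, hexp]
    have h := sumG (fun t => (t / (2 * a)) ^ (1 / 2 : ℝ))
    rw [h, ← haa, e1]
    have e2 : (1 / (2 * a)) ^ (1 / 2 : ℝ) = (Real.sqrt 2 * sa)⁻¹ := by
      rw [← Real.sqrt_eq_rpow, one_div, Real.sqrt_inv, Real.sqrt_mul (by norm_num), hsa_def]
    have e3 : ((1 : ℝ) / 2) ^ (1 / 2 : ℝ) = (Real.sqrt 2)⁻¹ := by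
      rw [← Real.sqrt_eq_rpow, one_div, Real.sqrt_inv]
    rw [e2, e3]
    have e4 : (Real.sqrt 2)⁻¹ + a * (Real.sqrt 2 * sa)⁻¹ = (1 + sa) / Real.sqrt 2 := by
      rw [← hsa2]; field_simp
    rw [e4, Real.log_div h1sa h2, Real.log_sqrt (by norm_num),
      show (1 : ℝ) + sa⁻¹ = (1 + sa) / sa by field_simp; ring,
      Real.log_div h1sa hsa0, l1,
      show Real.log sa = Real.log a / 2 by rw [hsa_def, Real.log_sqrt ha0']]
    ring


end
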